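/- Let γ ≥ 1 and suppose (R₁,Q₁,Z₁), (R₂,Q₂,Z₂) satisfy Qᵢ = (1 - Rᵢ/Zᵢ) Zᵢ^γ with 0 ≤ Rᵢ ≤ Zᵢ and Zᵢ ≥ m > 0 for i = 1,2. Then |Z₁ - Z₂| ≤ C(γ, m, max(Z₁,Z₂)) (|R₁ - R₂| + |Q₁ - Q₂|) for some constant C depending only on γ, the lower bound m and an upper bound on Z₁, Z₂. -/

import Mathlib

open Real

lemma key_mvt (γ m R : ℝ) (hγ : 1 ≤ γ) (hm : 0 < m)
    (a b : ℝ) (ha : m ≤ a) (hb : m ≤ b) (hRa : R ≤ a) (hRb : R ≤ b) (hba : b < a) :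
    m ^ (γ - 1) * (a - b) ≤ (a ^ γ - R * a ^ (γ - 1)) - (b ^ γ - R * b ^ (γ - 1)) := by
  set f : ℝ → ℝ := fun x => x ^ γ - R * x ^ (γ - 1) with hf
  set f' : ℝ → ℝ := fun x => γ * x ^ (γ - 1) - R * ((γ - 1) * x ^ (γ - 1 - 1)) with hf'
  have hderiv : ∀ x ∈ Set.Ioo b a, HasDerivAt f (f' x) x := by
    intro x hx
    have hx0 : x ≠ 0 := by have := hx.1; intro h; nlinarith
    simpa only [hf, hf'] using ((Real.hasDerivAt_rpow_const (p := γ) (Or.inl hx0)).fun_sub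
      ((Real.hasDerivAt_rpow_const (p := γ - 1) (Or.inl hx0)).const_mul R))
  have hcont : ContinuousOn f (Set.Icc b a) := by
    intro x hx
    have hx0 : x ≠ 0 := by have := hx.1; intro h; nlinarith
    exact (((Real.hasDerivAt_rpow_const (p := γ) (Or.inl hx0)).sub
      ((Real.hasDerivAt_rpow_const (p := γ - 1) (Or.inl hx0)).const_mul R)).continuousAt).continuousWithinAt
  obtain ⟨c, hc, hceq⟩ := exists_hasDerivAt_eq_slope f f' hba hcont hderiv
  have hcm : m ≤ c := le_trans hb hc.1.le
  have hc0 : 0 < c := lt_of_lt_of_le hm hcm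
  have hRc : R ≤ c := le_trans hRb hc.1.le
  have hbound : m ^ (γ - 1) ≤ f' c := by
    have h1 : c ^ (γ - 1 - 1) * c = c ^ (γ - 1) := by
      rw [← Real.rpow_add_one hc0.ne' (γ - 1 - 1)]; ring_nf
    have h2 : R * ((γ - 1) * c ^ (γ - 1 - 1)) ≤ (γ - 1) * c ^ (γ - 1) := by
      have hp : 0 ≤ c ^ (γ - 1 - 1) := Real.rpow_nonneg hc0.le _
      calc R * ((γ - 1) * c ^ (γ - 1 - 1)) ≤ c * ((γ - 1) * c ^ (γ - 1 - 1)) := by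
            exact mul_le_mul_of_nonneg_right hRc (mul_nonneg (by linarith) hp)
        _ = (γ - 1) * c ^ (γ - 1) := by rw [← h1]; ring
    have h3 : m ^ (γ - 1) ≤ c ^ (γ - 1) := Real.rpow_le_rpow hm.le hcm (by linarith)
    simp only [hf']; nlinarith [Real.rpow_nonneg hc0.le (γ - 1)]
  have hslope : f a - f b = f' c * (a - b) := by
    rw [eq_div_iff (by intro h; nlinarith : a - b ≠ 0)] at hceq; linarith
  have hfin : m ^ (γ - 1) * (a - b) ≤ f a - f b := by
    rw [hslope]; exact mul_le_mul_of_nonneg_right hbound (by linarith)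
  simpa [hf] using hfin

lemma key_abs (γ m R : ℝ) (hγ : 1 ≤ γ) (hm : 0 < m)
    (a b : ℝ) (ha : m ≤ a) (hb : m ≤ b) (hRa : R ≤ a) (hRb : R ≤ b) :
    m ^ (γ - 1) * |a - b| ≤ |(a ^ γ - R * a ^ (γ - 1)) - (b ^ γ - R * b ^ (γ - 1))| := by
  rcases lt_trichotomy a b with h | h | h
  · have := key_mvt γ m R hγ hm b a hb ha hRb hRa h
    rw [abs_sub_comm a b, abs_sub_comm (a ^ γ - R * a ^ (γ - 1)) _,
      abs_of_nonneg (by linarith : (0:ℝ) ≤ b - a)]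
    exact this.trans (le_abs_self _)
  · simp [h]
  · have := key_mvt γ m R hγ hm a b ha hb hRa hRb h
    rw [abs_of_nonneg (by linarith : (0:ℝ) ≤ a - b)]
    exact this.trans (le_abs_self _)

/-- Local Lipschitz continuity of the implicit function `Z = Z(R,Q)` defined
by `Q = (1 - R/Z) Z^γ`, on a region where `Z` is bounded below by `m > 0` and
above by `Mb`. -/
theorem Z_lipschitz (γ m Mb : ℝ) (hγ : 1 ≤ γ) (hm : 0 < m) :
    ∃ C > (0 : ℝ), ∀ R₁ Q₁ Z₁ R₂ Q₂ Z₂ : ℝ,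
      0 ≤ R₁ → R₁ ≤ Z₁ → m ≤ Z₁ → Z₁ ≤ Mb →
      Q₁ = (1 - R₁ / Z₁) * Z₁ ^ γ →
      0 ≤ R₂ → R₂ ≤ Z₂ → m ≤ Z₂ → Z₂ ≤ Mb →
      Q₂ = (1 - R₂ / Z₂) * Z₂ ^ γ →
      |Z₁ - Z₂| ≤ C * (|R₁ - R₂| + |Q₁ - Q₂|) := by
  set M : ℝ := max Mb m with hM
  have hM0 : 0 < M := lt_of_lt_of_le hm (le_max_right _ _)
  have hmpow : 0 < m ^ (γ - 1) := Real.rpow_pos_of_pos hm _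
  have hMpow : 0 < M ^ (γ - 1) := Real.rpow_pos_of_pos hM0 _
  refine ⟨(1 + M ^ (γ - 1)) / m ^ (γ - 1), by positivity, ?_⟩
  intro R₁ Q₁ Z₁ R₂ Q₂ Z₂ hR₁ hRZ₁ hmZ₁ hZM₁ hQ₁ hR₂ hRZ₂ hmZ₂ hZM₂ hQ₂
  have hZ₁0 : (0:ℝ) < Z₁ := lt_of_lt_of_le hm hmZ₁
  have hZ₂0 : (0:ℝ) < Z₂ := lt_of_lt_of_le hm hmZ₂
  -- rewrite Q equations
  have hq : ∀ Z R Q : ℝ, 0 < Z → Q = (1 - R / Z) * Z ^ γ → Q = Z ^ γ - R * Z ^ (γ - 1) := by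
    intro Z R Q hZ hQ
    have h1 : Z ^ γ = Z ^ (γ - 1) * Z := by
      rw [← Real.rpow_add_one hZ.ne' (γ - 1)]; ring_nf
    rw [hQ, h1]; field_simp
  have hq₁ := hq Z₁ R₁ Q₁ hZ₁0 hQ₁
  have hq₂ := hq Z₂ R₂ Q₂ hZ₂0 hQ₂
  set R : ℝ := min R₁ R₂ with hR
  have hRa : R ≤ Z₁ := le_trans (min_le_left _ _) hRZ₁
  have hRb : R ≤ Z₂ := le_trans (min_le_right _ _) hRZ₂
  have hkey := key_abs γ m R hγ hm Z₁ Z₂ hmZ₁ hmZ₂ hRa hRb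
  -- bound on Z_i^{γ-1}
  have hZpow : ∀ Z : ℝ, m ≤ Z → Z ≤ Mb → Z ^ (γ - 1) ≤ M ^ (γ - 1) := by
    intro Z h1 h2
    exact Real.rpow_le_rpow (by linarith) (le_trans h2 (le_max_left _ _)) (by linarith)
  have hZ₁pow := hZpow Z₁ hmZ₁ hZM₁
  have hZ₂pow := hZpow Z₂ hmZ₂ hZM₂
  have hZ₁pn : (0:ℝ) ≤ Z₁ ^ (γ - 1) := Real.rpow_nonneg hZ₁0.le _
  have hZ₂pn : (0:ℝ) ≤ Z₂ ^ (γ - 1) := Real.rpow_nonneg hZ₂0.le _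
  -- bound the rhs of hkey
  have hrhs : |(Z₁ ^ γ - R * Z₁ ^ (γ - 1)) - (Z₂ ^ γ - R * Z₂ ^ (γ - 1))|
      ≤ |Q₁ - Q₂| + M ^ (γ - 1) * |R₁ - R₂| := by
    have hid : (Z₁ ^ γ - R * Z₁ ^ (γ - 1)) - (Z₂ ^ γ - R * Z₂ ^ (γ - 1))
        = (Q₁ - Q₂) + ((R₁ - R) * Z₁ ^ (γ - 1) - (R₂ - R) * Z₂ ^ (γ - 1)) := by
      rw [hq₁, hq₂]; ring
    rw [hid]
    refine (abs_add_le _ _).trans (add_le_add_right ?_ _)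
    rcases le_total R₁ R₂ with h | h
    · have : R = R₁ := min_eq_left h
      rw [this]
      have : |(R₁ - R₁) * Z₁ ^ (γ - 1) - (R₂ - R₁) * Z₂ ^ (γ - 1)| = (R₂ - R₁) * Z₂ ^ (γ - 1) := by
        rw [show (R₁ - R₁) * Z₁ ^ (γ - 1) - (R₂ - R₁) * Z₂ ^ (γ - 1) = -((R₂ - R₁) * Z₂ ^ (γ - 1)) by ring,
          abs_neg, abs_of_nonneg (mul_nonneg (by linarith) hZ₂pn)]
      rw [this, abs_sub_comm, abs_of_nonneg (by linarith : (0:ℝ) ≤ R₂ - R₁)]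
      calc (R₂ - R₁) * Z₂ ^ (γ - 1) ≤ (R₂ - R₁) * M ^ (γ - 1) :=
            mul_le_mul_of_nonneg_left hZ₂pow (by linarith)
        _ = M ^ (γ - 1) * (R₂ - R₁) := by ring
    · have : R = R₂ := min_eq_right h
      rw [this]
      have : |(R₁ - R₂) * Z₁ ^ (γ - 1) - (R₂ - R₂) * Z₂ ^ (γ - 1)| = (R₁ - R₂) * Z₁ ^ (γ - 1) := by
        rw [show (R₁ - R₂) * Z₁ ^ (γ - 1) - (R₂ - R₂) * Z₂ ^ (γ - 1) = (R₁ - R₂) * Z₁ ^ (γ - 1) by ring,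
          abs_of_nonneg (mul_nonneg (by linarith) hZ₁pn)]
      rw [this, abs_of_nonneg (by linarith : (0:ℝ) ≤ R₁ - R₂)]
      calc (R₁ - R₂) * Z₁ ^ (γ - 1) ≤ (R₁ - R₂) * M ^ (γ - 1) :=
            mul_le_mul_of_nonneg_left hZ₁pow (by linarith)
        _ = M ^ (γ - 1) * (R₁ - R₂) := by ring
  have hstep : m ^ (γ - 1) * |Z₁ - Z₂| ≤ |Q₁ - Q₂| + M ^ (γ - 1) * |R₁ - R₂| :=
    hkey.trans hrhs
  rw [div_mul_eq_mul_div, le_div_iff₀ hmpow]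
  have h1 : (0:ℝ) ≤ |R₁ - R₂| := abs_nonneg _
  have h2 : (0:ℝ) ≤ |Q₁ - Q₂| := abs_nonneg _
  nlinarith [mul_nonneg hMpow.le h2]
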